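/- Let n ≥ 5, 0 < s < 2, and U₁(X) = κ_{n,s}(1+|X|^{2-s})^{-(n-2)/(2-s)} with κ_{n,s} = ((n-s)(n-2))^{(n-2)/(2(2-s))}. Then ∫_{ℝⁿ} |X|² |∇U₁|² dX / ∫_{ℝⁿ} U₁² dX = n(n-2)(n+2-s) / (2(2n-2-s)). -/

import Mathlib

open MeasureTheory Set InnerProductSpace Metric

noncomputable def kappa (n : ℕ) (s : ℝ) : ℝ :=
  (((n : ℝ) - s) * ((n : ℝ) - 2)) ^ (((n : ℝ) - 2) / (2 * (2 - s)))

noncomputable def U1 (n : ℕ) (s : ℝ) (X : EuclideanSpace ℝ (Fin n)) : ℝ :=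
  kappa n s * (1 + ‖X‖ ^ (2 - s)) ^ (-(((n : ℝ) - 2) / (2 - s)))

section Aux

lemma K_eq {a b : ℝ} (ha : 0 < a) (hb : 0 < b) :
    ∫ u in Ioo (0:ℝ) 1, u ^ (a-1) * (1-u) ^ (b-1) =
      Real.Gamma a * Real.Gamma b / Real.Gamma (a+b) := by
  have hG : Real.Gamma (a+b) ≠ 0 := (Real.Gamma_pos_of_pos (by linarith)).ne'
  have hbeta := Complex.Gamma_mul_Gamma_eq_betaIntegral
    (s := (a:ℂ)) (t := (b:ℂ)) (by simpa using ha) (by simpa using hb)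
  have hBI : Complex.betaIntegral a b =
      ((∫ u in Ioo (0:ℝ) 1, u ^ (a-1) * (1-u) ^ (b-1) : ℝ) : ℂ) := by
    rw [Complex.betaIntegral, intervalIntegral.integral_of_le zero_le_one,
      integral_Ioc_eq_integral_Ioo]
    rw [show ((∫ u in Ioo (0:ℝ) 1, u ^ (a-1) * (1-u) ^ (b-1) : ℝ) : ℂ)
        = ∫ u in Ioo (0:ℝ) 1, ((u ^ (a-1) * (1-u) ^ (b-1) : ℝ) : ℂ) from
      (integral_ofReal (𝕜 := ℂ)).symm]
    refine setIntegral_congr_fun measurableSet_Ioo (fun x hx => ?_)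
    have hx0 : (0:ℝ) ≤ x := hx.1.le
    have hx1 : (0:ℝ) ≤ 1 - x := by linarith [hx.2]
    rw [Complex.ofReal_mul, Complex.ofReal_cpow hx0, Complex.ofReal_cpow hx1]
    push_cast
    ring
  rw [hBI, ← Complex.ofReal_add, Complex.Gamma_ofReal, Complex.Gamma_ofReal,
    Complex.Gamma_ofReal, ← Complex.ofReal_mul, ← Complex.ofReal_mul] at hbeta
  have h2 := Complex.ofReal_injective hbeta
  field_simp
  linarith [h2]

lemma image_div_one_sub : (fun u : ℝ => u / (1 - u)) '' Ioo 0 1 = Ioi 0 := by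
  ext t
  constructor
  · rintro ⟨u, ⟨hu0, hu1⟩, rfl⟩
    exact div_pos hu0 (by linarith)
  · intro ht
    have ht' : (0:ℝ) < t := ht
    refine ⟨t / (1 + t), ⟨div_pos ht' (by linarith), ?_⟩, ?_⟩
    · rw [div_lt_one (by linarith)]; linarith
    · field_simp; ring

lemma J_eq_K (a b : ℝ) :
    ∫ t in Ioi (0:ℝ), t ^ (a-1) * (1+t) ^ (-(a+b)) =
      ∫ u in Ioo (0:ℝ) 1, u ^ (a-1) * (1-u) ^ (b-1) := by
  have hderiv : ∀ u ∈ Ioo (0:ℝ) 1,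
      HasDerivWithinAt (fun u : ℝ => u / (1 - u)) (((1-u)^2)⁻¹) (Ioo 0 1) u := by
    intro u hu
    have h1 : (1:ℝ) - u ≠ 0 := by have := hu.2; intro h; linarith
    have := (hasDerivAt_id u).div ((hasDerivAt_id u).const_sub 1) h1
    refine this.hasDerivWithinAt.congr_deriv ?_
    simp only [id]
    field_simp
    ring
  have hinj : InjOn (fun u : ℝ => u / (1 - u)) (Ioo 0 1) := by
    intro x hx y hy hxy
    have hx1 : (1:ℝ) - x ≠ 0 := by have := hx.2; intro h; linarith
    have hy1 : (1:ℝ) - y ≠ 0 := by have := hy.2; intro h; linarith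
    field_simp at hxy
    ring_nf at hxy
    linarith
  have key := integral_image_eq_integral_abs_deriv_smul measurableSet_Ioo hderiv hinj
    (fun t => t ^ (a-1) * (1+t) ^ (-(a+b)))
  rw [image_div_one_sub] at key
  rw [key]
  refine setIntegral_congr_fun measurableSet_Ioo (fun u hu => ?_)
  have hu0 : (0:ℝ) < u := hu.1
  have hu1 : (0:ℝ) < 1 - u := by have := hu.2; linarith
  have h1u : 1 + u / (1-u) = (1-u)⁻¹ := by field_simp; ring
  have h2 : |(((1-u):ℝ)^2)⁻¹| = ((1-u):ℝ)^(-2:ℝ) := by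
    rw [abs_of_nonneg (by positivity), ← Real.rpow_natCast (1-u) 2, ← Real.rpow_neg hu1.le]
    norm_num
  have h3 : (u/(1-u))^(a-1) = u^(a-1) * (1-u)^(-(a-1)) := by
    rw [Real.div_rpow hu0.le hu1.le, Real.rpow_neg hu1.le, div_eq_mul_inv]
  have h4 : (((1-u):ℝ)⁻¹)^(-(a+b)) = ((1-u):ℝ)^(a+b) := by
    rw [Real.inv_rpow hu1.le, ← Real.rpow_neg hu1.le, neg_neg]
  rw [smul_eq_mul, h1u, h2, h3, h4]
  have hexp : ((-2:ℝ)) + (-(a-1)) + (a+b) = b - 1 := by ring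
  calc (1-u)^(-2:ℝ) * (u^(a-1)*(1-u)^(-(a-1)) * (1-u)^(a+b))
      = u^(a-1) * ((1-u)^(-2:ℝ) * (1-u)^(-(a-1)) * (1-u)^(a+b)) := by ring
    _ = u^(a-1) * (1-u)^(((-2:ℝ)) + (-(a-1)) + (a+b)) := by
        rw [← Real.rpow_add hu1, ← Real.rpow_add hu1]
    _ = u^(a-1)*(1-u)^(b-1) := by rw [hexp]

lemma Jint_eq {a b : ℝ} (ha : 0 < a) (hb : 0 < b) :
    ∫ t in Ioi (0:ℝ), t ^ (a-1) * (1+t) ^ (-(a+b)) =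
      Real.Gamma a * Real.Gamma b / Real.Gamma (a+b) :=
  (J_eq_K a b).trans (K_eq ha hb)

lemma cov_rpow {c : ℝ} (hc : 0 < c) (g : ℝ → ℝ) :
    ∫ t in Ioi (0:ℝ), g t = ∫ r in Ioi (0:ℝ), (c * r ^ (c-1)) * g (r ^ c) := by
  have hderiv : ∀ r ∈ Ioi (0:ℝ),
      HasDerivWithinAt (fun r : ℝ => r ^ c) (c * r ^ (c-1)) (Ioi 0) r := by
    intro r hr
    exact (Real.hasDerivAt_rpow_const (Or.inl (ne_of_gt hr))).hasDerivWithinAt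
  have hinj : InjOn (fun r : ℝ => r ^ c) (Ioi 0) :=
    (Real.rpow_left_injOn hc.ne').mono (fun x (hx : (0:ℝ) < x) => (le_of_lt hx : (0:ℝ) ≤ x))
  have himg : (fun r : ℝ => r ^ c) '' Ioi 0 = Ioi 0 := by
    ext t
    constructor
    · rintro ⟨r, hr, rfl⟩; exact Real.rpow_pos_of_pos hr c
    · intro ht
      refine ⟨t ^ c⁻¹, Real.rpow_pos_of_pos ht _, ?_⟩
      show (t ^ c⁻¹) ^ c = t
      rw [← Real.rpow_mul (le_of_lt ht), inv_mul_cancel₀ hc.ne', Real.rpow_one]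
  have key := integral_image_eq_integral_abs_deriv_smul measurableSet_Ioi hderiv hinj g
  rw [himg] at key
  rw [key]
  refine setIntegral_congr_fun measurableSet_Ioi (fun r hr => ?_)
  have : (0:ℝ) < r := hr
  rw [smul_eq_mul, abs_of_nonneg (by positivity)]

lemma oneD {c : ℝ} (hc : 0 < c) (C e E a' b' : ℝ) (k : ℕ)
    (hE : E = -(a' + b')) (hke : (k:ℝ) + e = c * a' - 1) :
    ∫ r in Ioi (0:ℝ), (r:ℝ) ^ k * (C * r ^ e * (1 + r ^ c) ^ E)
      = (C / c) * ∫ t in Ioi (0:ℝ), t ^ (a'-1) * (1+t) ^ (-(a'+b')) := by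
  rw [cov_rpow hc (fun t => t ^ (a'-1) * (1+t) ^ (-(a'+b'))), ← integral_const_mul]
  refine setIntegral_congr_fun measurableSet_Ioi (fun r hr => ?_)
  have hr' : (0:ℝ) < r := hr
  have h2 : (r:ℝ) ^ k = r ^ ((k:ℝ)) := (Real.rpow_natCast r k).symm
  have h1 : ((r:ℝ)^c)^(a'-1) = r^(c*(a'-1)) := (Real.rpow_mul hr'.le _ _).symm
  have h3 : (c - 1) + c*(a'-1) = (k:ℝ) + e := by linarith [hke]
  calc (r:ℝ) ^ k * (C * r ^ e * (1 + r ^ c) ^ E)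
      = C * (r ^ ((k:ℝ)) * r ^ e) * (1 + r ^ c) ^ E := by rw [h2]; ring
    _ = C * r ^ ((k:ℝ) + e) * (1 + r ^ c) ^ E := by rw [← Real.rpow_add hr']
    _ = C * (r ^ ((c-1) + c*(a'-1))) * (1 + r ^ c) ^ (-(a'+b')) := by rw [hE, h3]
    _ = C * (r ^ (c-1) * r ^ (c*(a'-1))) * (1 + r ^ c) ^ (-(a'+b')) := by
        rw [Real.rpow_add hr']
    _ = C / c * (c * r ^ (c-1) * (((r:ℝ)^c)^(a'-1) * (1 + r ^ c) ^ (-(a'+b')))) := by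
        rw [h1]; field_simp

lemma U1_hasGradientAt (n : ℕ) {s : ℝ} (hs2 : s < 2) {X : EuclideanSpace ℝ (Fin n)}
    (hX : X ≠ 0) :
    HasGradientAt (U1 n s)
      ((-(kappa n s * ((n:ℝ) - 2)) * ‖X‖ ^ (-s)
        * (1 + ‖X‖ ^ (2-s)) ^ (-(((n:ℝ)-2)/(2-s)) - 1)) • X) X := by
  set p : ℝ := ((n:ℝ)-2)/(2-s) with hp
  set m : ℝ := (2-s)/2 with hm
  have hXn : (0:ℝ) < ‖X‖ := norm_pos_iff.mpr hX
  have ht0 : (0:ℝ) < ‖X‖^2 := by positivity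
  have hbase : (0:ℝ) < 1 + (‖X‖^2) ^ m := by positivity
  have hU : U1 n s = (fun t : ℝ => kappa n s * (1 + t ^ m) ^ (-p)) ∘ (fun Y => ‖Y‖ ^ 2) := by
    funext Y
    simp only [U1, Function.comp]
    congr 2
    rw [← Real.rpow_natCast ‖Y‖ 2, ← Real.rpow_mul (norm_nonneg Y)]
    norm_num
    rw [show (2:ℝ) * m = 2 - s by rw [hm]; ring]
  have hq : HasFDerivAt (fun Y : EuclideanSpace ℝ (Fin n) => ‖Y‖ ^ 2)
      ((2:ℝ) • (innerSL ℝ X)) X := by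
    have := (hasStrictFDerivAt_norm_sq X).hasFDerivAt
    refine this.congr_fderiv ?_
    ext y; simp
  have hin : HasDerivAt (fun t : ℝ => 1 + t ^ m) (m * (‖X‖^2) ^ (m-1)) (‖X‖^2) :=
    ((Real.hasDerivAt_rpow_const (Or.inl ht0.ne')).const_add 1)
  have hout : HasDerivAt (fun y : ℝ => y ^ (-p))
      ((-p) * (1 + (‖X‖^2) ^ m) ^ (-p - 1)) (1 + (‖X‖^2) ^ m) :=
    Real.hasDerivAt_rpow_const (Or.inl hbase.ne')
  have hφ0 : HasDerivAt (fun t : ℝ => (1 + t ^ m) ^ (-p))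
      (((-p) * (1 + (‖X‖^2) ^ m) ^ (-p - 1)) * (m * (‖X‖^2) ^ (m-1)))
      (‖X‖^2) := by have := HasDerivAt.comp (‖X‖^2) hout hin; exact this
  have hφ : HasDerivAt (fun t : ℝ => kappa n s * (1 + t ^ m) ^ (-p))
      (kappa n s * (((-p) * (1 + (‖X‖^2) ^ m) ^ (-p - 1)) * (m * (‖X‖^2) ^ (m-1))))
      (‖X‖^2) := hφ0.const_mul _
  have hcomp := hφ.comp_hasFDerivAt X hq
  rw [← hU] at hcomp
  rw [hasGradientAt_iff_hasFDerivAt]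
  have hs' : (2:ℝ) - s ≠ 0 := by linarith
  have h1 : ((‖X‖:ℝ)^2) ^ m = ‖X‖ ^ (2-s) := by
    rw [← Real.rpow_natCast ‖X‖ 2, ← Real.rpow_mul (norm_nonneg X)]
    norm_num
    rw [show (2:ℝ) * m = 2 - s by rw [hm]; ring]
  have h2 : ((‖X‖:ℝ)^2) ^ (m-1) = ‖X‖ ^ (-s) := by
    rw [← Real.rpow_natCast ‖X‖ 2, ← Real.rpow_mul (norm_nonneg X)]
    norm_num
    rw [show (2:ℝ) * (m-1) = -s by rw [hm]; ring]
  have hc : -(kappa n s * ((n:ℝ)-2)) = kappa n s * (-p) * m * 2 := by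
    rw [hp, hm]; field_simp
  have heq : (toDual ℝ (EuclideanSpace ℝ (Fin n)))
      ((-(kappa n s * ((n:ℝ) - 2)) * ‖X‖ ^ (-s)
        * (1 + ‖X‖ ^ (2-s)) ^ (-p - 1)) • X)
      = (kappa n s * (((-p) * (1 + (‖X‖^2) ^ m) ^ (-p - 1)) * (m * (‖X‖^2) ^ (m-1))))
        • (2:ℝ) • (innerSL ℝ X) := by
    ext y
    simp only [toDual_apply_apply, ContinuousLinearMap.smul_apply, innerSL_apply_apply, smul_eq_mul]
    rw [real_inner_smul_left, h1, h2, hc]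
    ring
  exact heq ▸ hcomp

lemma rpow_sq {x : ℝ} (hx : 0 ≤ x) (a : ℝ) : (x ^ a) ^ 2 = x ^ (a * 2) := by
  rw [Real.rpow_mul hx, ← Real.rpow_natCast (x ^ a) 2]
  norm_num

lemma U1_integrand_eq (n : ℕ) {s : ℝ} (hs2 : s < 2) (X : EuclideanSpace ℝ (Fin n)) :
    ‖X‖ ^ 2 * ‖gradient (U1 n s) X‖ ^ 2
      = (kappa n s * ((n:ℝ)-2))^2 * ‖X‖ ^ (4-2*s)
        * (1 + ‖X‖ ^ (2-s)) ^ ((-(((n:ℝ)-2)/(2-s)) - 1) * 2) := by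
  rcases eq_or_ne X 0 with rfl | hX
  · rw [show ‖(0 : EuclideanSpace ℝ (Fin n))‖ = 0 from norm_zero,
      Real.zero_rpow (show (4:ℝ)-2*s ≠ 0 by linarith)]
    ring
  · have hXn : (0:ℝ) < ‖X‖ := norm_pos_iff.mpr hX
    have hb : (0:ℝ) < 1 + ‖X‖ ^ (2-s) := by positivity
    rw [(U1_hasGradientAt n hs2 hX).gradient, norm_smul, mul_pow, Real.norm_eq_abs, sq_abs]
    have e1 : ((1 + ‖X‖^(2-s)) ^ (-(((n:ℝ)-2)/(2-s)) - 1)) ^ 2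
        = (1 + ‖X‖^(2-s)) ^ ((-(((n:ℝ)-2)/(2-s)) - 1) * 2) := rpow_sq hb.le _
    have e2 : (‖X‖ ^ (-s)) ^ 2 = ‖X‖ ^ (-s * 2) := rpow_sq (norm_nonneg X) _
    have e3 : ‖X‖ ^ 2 * (‖X‖ ^ (-s*2) * ‖X‖ ^ 2) = ‖X‖ ^ (4-2*s) := by
      rw [← Real.rpow_natCast ‖X‖ 2, ← Real.rpow_add hXn, ← Real.rpow_add hXn]
      norm_num
      congr 1
      ring
    calc ‖X‖ ^ 2 * ((-(kappa n s * ((n:ℝ)-2)) * ‖X‖ ^ (-s)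
            * (1 + ‖X‖^(2-s)) ^ (-(((n:ℝ)-2)/(2-s)) - 1)) ^ 2 * ‖X‖ ^ 2)
        = (kappa n s * ((n:ℝ)-2))^2 * (‖X‖ ^ 2 * ((‖X‖ ^ (-s)) ^ 2 * ‖X‖ ^ 2))
            * ((1 + ‖X‖^(2-s)) ^ (-(((n:ℝ)-2)/(2-s)) - 1)) ^ 2 := by ring
      _ = (kappa n s * ((n:ℝ)-2))^2 * ‖X‖ ^ (4-2*s)
            * (1 + ‖X‖^(2-s)) ^ ((-(((n:ℝ)-2)/(2-s)) - 1) * 2) := by rw [e2, e3, e1]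

lemma U1_sq_eq (n : ℕ) (s : ℝ) (X : EuclideanSpace ℝ (Fin n)) :
    (U1 n s X) ^ 2 = (kappa n s)^2 * ‖X‖ ^ (0:ℝ)
      * (1 + ‖X‖ ^ (2-s)) ^ ((-(((n:ℝ)-2)/(2-s))) * 2) := by
  have hb : (0:ℝ) < 1 + ‖X‖ ^ (2-s) := by positivity
  rw [U1, mul_pow, rpow_sq hb.le, Real.rpow_zero, mul_one]

lemma final_frac (n s : ℝ) (hn5 : 5 ≤ n) (hs0 : 0 < s) (hs2 : s < 2) :
    (n-2)^2 * ((n/(2-s)+1)*(n/(2-s)))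
      / ((n/(2-s)+(n-4)/(2-s)+1)*(n/(2-s)+(n-4)/(2-s)))
    = n * (n - 2) * (n + 2 - s) / (2 * (2 * n - 2 - s)) := by
  have hc : (0:ℝ) < 2 - s := by linarith
  have ha : 0 < n/(2-s) := div_pos (by linarith) hc
  have hb : 0 < (n-4)/(2-s) := div_pos (by linarith) hc
  have hpos1 : ((n/(2-s)+(n-4)/(2-s)+1)*(n/(2-s)+(n-4)/(2-s))) ≠ 0 := by positivity
  have hpos2 : (2*(2*n-2-s)) ≠ 0 := by nlinarith
  rw [div_eq_div_iff hpos1 hpos2]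
  field_simp
  ring

end Aux

theorem stmt_4 (n : ℕ) (hn : 5 ≤ n) (s : ℝ) (hs0 : 0 < s) (hs2 : s < 2) :
    (∫ X : EuclideanSpace ℝ (Fin n), ‖X‖ ^ 2 * ‖gradient (U1 n s) X‖ ^ 2) /
        (∫ X : EuclideanSpace ℝ (Fin n), (U1 n s X) ^ 2) =
      (n : ℝ) * ((n : ℝ) - 2) * ((n : ℝ) + 2 - s) / (2 * (2 * (n : ℝ) - 2 - s)) := by
  have hn5 : (5:ℝ) ≤ (n:ℝ) := by exact_mod_cast hn
  have hc : (0:ℝ) < 2 - s := by linarith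
  haveI : Nonempty (Fin n) := ⟨⟨0, by omega⟩⟩
  haveI : Nontrivial (EuclideanSpace ℝ (Fin n)) := by
    refine ⟨EuclideanSpace.single ⟨0, by omega⟩ 1, 0, ?_⟩
    intro h
    have := congrArg (fun f => f ⟨0, by omega⟩) h
    simpa using this
  have hdim : Module.finrank ℝ (EuclideanSpace ℝ (Fin n)) = n := finrank_euclideanSpace_fin
  set A : ℝ := kappa n s * ((n:ℝ)-2) with hA
  have hkpos : 0 < kappa n s := by
    apply Real.rpow_pos_of_pos
    have : (0:ℝ) < (n:ℝ) - s := by linarith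
    have h2 : (0:ℝ) < (n:ℝ) - 2 := by linarith
    positivity
  -- polar coordinates
  have hnum0 := integral_fun_norm_addHaar (volume : Measure (EuclideanSpace ℝ (Fin n)))
    (fun r : ℝ => A^2 * r ^ (4-2*s) * (1 + r ^ (2-s)) ^ ((-(((n:ℝ)-2)/(2-s)) - 1) * 2))
  have hden0 := integral_fun_norm_addHaar (volume : Measure (EuclideanSpace ℝ (Fin n)))
    (fun r : ℝ => (kappa n s)^2 * r ^ (0:ℝ) * (1 + r ^ (2-s)) ^ ((-(((n:ℝ)-2)/(2-s))) * 2))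
  rw [hdim] at hnum0 hden0
  have enum : (∫ X : EuclideanSpace ℝ (Fin n), ‖X‖ ^ 2 * ‖gradient (U1 n s) X‖ ^ 2)
      = ∫ X : EuclideanSpace ℝ (Fin n),
          (fun r : ℝ => A^2 * r ^ (4-2*s) * (1 + r ^ (2-s)) ^ ((-(((n:ℝ)-2)/(2-s)) - 1) * 2)) ‖X‖ :=
    integral_congr_ae (Filter.Eventually.of_forall (fun X => U1_integrand_eq n hs2 X))
  have eden : (∫ X : EuclideanSpace ℝ (Fin n), (U1 n s X) ^ 2)
      = ∫ X : EuclideanSpace ℝ (Fin n),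
          (fun r : ℝ => (kappa n s)^2 * r ^ (0:ℝ) * (1 + r ^ (2-s)) ^ ((-(((n:ℝ)-2)/(2-s))) * 2)) ‖X‖ :=
    integral_congr_ae (Filter.Eventually.of_forall (fun X => U1_sq_eq n s X))
  rw [enum, eden, hnum0, hden0]
  -- one-dimensional integrals
  have hEnum : (-(((n:ℝ)-2)/(2-s)) - 1) * 2
      = -(((n:ℝ)/(2-s) + 2) + ((n:ℝ)-4)/(2-s)) := by
    field_simp
    ring
  have hkenum : ((n - 1 : ℕ) : ℝ) + (4-2*s) = (2-s) * ((n:ℝ)/(2-s) + 2) - 1 := by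
    have : ((n - 1 : ℕ) : ℝ) = (n:ℝ) - 1 := by
      have : (1:ℕ) ≤ n := by omega
      push_cast [Nat.cast_sub this]
      ring
    rw [this]
    field_simp
    ring
  have hEden : (-(((n:ℝ)-2)/(2-s))) * 2
      = -(((n:ℝ)/(2-s)) + ((n:ℝ)-4)/(2-s)) := by
    field_simp
    ring
  have hkeden : ((n - 1 : ℕ) : ℝ) + 0 = (2-s) * ((n:ℝ)/(2-s)) - 1 := by
    have : ((n - 1 : ℕ) : ℝ) = (n:ℝ) - 1 := by
      have : (1:ℕ) ≤ n := by omega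
      push_cast [Nat.cast_sub this]
      ring
    rw [this]
    field_simp
    ring
  have h1num := oneD hc (A^2) (4-2*s) ((-(((n:ℝ)-2)/(2-s)) - 1) * 2)
    ((n:ℝ)/(2-s) + 2) (((n:ℝ)-4)/(2-s)) (n-1) hEnum hkenum
  have h1den := oneD hc ((kappa n s)^2) 0 ((-(((n:ℝ)-2)/(2-s))) * 2)
    ((n:ℝ)/(2-s)) (((n:ℝ)-4)/(2-s)) (n-1) hEden hkeden
  simp only [smul_eq_mul, nsmul_eq_mul]
  rw [h1num, h1den]
  -- Gamma computations
  set a : ℝ := (n:ℝ)/(2-s) with ha'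
  set b : ℝ := ((n:ℝ)-4)/(2-s) with hb'
  have hapos : 0 < a := div_pos (by linarith) hc
  have hbpos : 0 < b := div_pos (by linarith) hc
  have habpos : 0 < a + b := by linarith
  have hJden : (∫ t in Ioi (0:ℝ), t ^ (a-1) * (1+t) ^ (-(a+b)))
      = Real.Gamma a * Real.Gamma b / Real.Gamma (a+b) := Jint_eq hapos hbpos
  have hJnum : (∫ t in Ioi (0:ℝ), t ^ ((a+2)-1) * (1+t) ^ (-((a+2)+b)))
      = Real.Gamma (a+2) * Real.Gamma b / Real.Gamma ((a+2)+b) := Jint_eq (by linarith) hbpos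
  have hGa : Real.Gamma (a+2) = (a+1)*a*Real.Gamma a := by
    rw [show a+2 = (a+1)+1 by ring, Real.Gamma_add_one (by linarith),
      Real.Gamma_add_one hapos.ne']
    ring
  have hGab : Real.Gamma ((a+2)+b) = (a+b+1)*(a+b)*Real.Gamma (a+b) := by
    rw [show (a+2)+b = ((a+b)+1)+1 by ring, Real.Gamma_add_one (by linarith),
      Real.Gamma_add_one habpos.ne']
    ring
  rw [hJnum, hJden, hGa, hGab]
  -- final arithmetic
  have hvol : 0 < volume.real (ball (0 : EuclideanSpace ℝ (Fin n)) 1) :=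
    ENNReal.toReal_pos (measure_ball_pos volume 0 one_pos).ne' measure_ball_lt_top.ne
  have hnne : (0:ℝ) < (n:ℝ) := by linarith
  have hGapos := Real.Gamma_pos_of_pos hapos
  have hGbpos := Real.Gamma_pos_of_pos hbpos
  have hGabpos := Real.Gamma_pos_of_pos habpos
  rw [mul_div_mul_left _ _ hnne.ne', mul_div_mul_left _ _ hvol.ne']
  have h2s : (2:ℝ) - s ≠ 0 := hc.ne'
  have step1 : A ^ 2 / (2 - s) * ((a + 1) * a * Real.Gamma a * Real.Gamma b
        / ((a + b + 1) * (a + b) * Real.Gamma (a+b))) /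
      (kappa n s ^ 2 / (2 - s) * (Real.Gamma a * Real.Gamma b / Real.Gamma (a+b)))
    = ((n:ℝ)-2)^2 * ((a+1)*a) / ((a+b+1)*(a+b)) := by
    rw [hA]
    field_simp
  rw [step1, ha', hb']
  exact final_frac (n:ℝ) s hn5 hs0 hs2
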